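/- Let ν be a finite measure on a measurable space (Ω, 𝒜), let μ = ν.withDensity ρ be a finite measure with measurable density ρ ≥ 0, let F ⊆ 𝒜 be a sub-σ-algebra, let Y be a conditional density of μ given F with respect to ν, and set μ_F := ν.withDensity Y. Then for every finite measure θ on (Ω, 𝒜) that agrees with μ on F (θ(A) = μ(A) for all A ∈ F), one has the Pythagorean identity D(θ‖ν) = D(θ‖μ_F) + D(μ_F‖ν). -/

import Mathlib

open MeasureTheory Filter Topology ENNReal

open Classical in
/-- Information divergence `D(μ‖ν)`: if `μ ≪ ν` it is `∫ (ρ ln ρ − ρ + 1) dν` where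
`ρ` is the density of `μ` with respect to `ν`, and `∞` otherwise. -/
noncomputable def infoDiv {Ω : Type*} [MeasurableSpace Ω] (μ ν : Measure Ω) : ℝ≥0∞ :=
  if μ ≪ ν then
    ∫⁻ x, ENNReal.ofReal ((μ.rnDeriv ν x).toReal * Real.log (μ.rnDeriv ν x).toReal
      - (μ.rnDeriv ν x).toReal + 1) ∂ν
  else ∞

private lemma aux_f_nonneg {a : ℝ} (ha : 0 ≤ a) : 0 ≤ a * Real.log a - a + 1 := by
  rcases eq_or_lt_of_le ha with h | h
  · simp [← h]
  · have h1 : Real.log (1 / a) ≤ 1 / a - 1 := Real.log_le_sub_one_of_pos (by positivity)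
    rw [one_div, Real.log_inv] at h1
    have h2 : a * (-Real.log a) ≤ a * (a⁻¹ - 1) := by
      apply mul_le_mul_of_nonneg_left h1 ha
    rw [mul_sub, mul_inv_cancel₀ (ne_of_gt h)] at h2
    nlinarith

private lemma aux_mul_log_le {a b : ℝ} (ha : 0 ≤ a) (hb : 0 ≤ b) :
    a * max (Real.log b) 0 ≤ (a * Real.log a - a + 1) + b := by
  rcases le_or_gt (Real.log b) 0 with h | h
  · rw [max_eq_right h, mul_zero]
    have := aux_f_nonneg ha; linarith
  · rw [max_eq_left h.le]
    rcases eq_or_lt_of_le ha with h0 | h0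
    · rw [← h0]; simp; positivity
    · have hb0 : 0 < b := by
        by_contra hbb
        push_neg at hbb
        have : b = 0 := le_antisymm hbb hb
        simp [this] at h
      have h1 : Real.log (b / a) ≤ b / a - 1 := Real.log_le_sub_one_of_pos (by positivity)
      rw [Real.log_div (ne_of_gt hb0) (ne_of_gt h0)] at h1
      have h2 : a * (Real.log b - Real.log a) ≤ a * (b / a - 1) :=
        mul_le_mul_of_nonneg_left h1 ha
      rw [mul_sub, mul_sub, mul_div_cancel₀ _ (ne_of_gt h0)] at h2
      nlinarith

private lemma aux_neg_le {b : ℝ} (hb : 0 ≤ b) : b * max (-Real.log b) 0 ≤ 1 := by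
  rcases le_or_gt (-Real.log b) 0 with h | h
  · rw [max_eq_right h]; simp
  · rw [max_eq_left h.le]
    rcases eq_or_lt_of_le hb with h0 | h0
    · simp [← h0]
    · have h1 : Real.log (1 / b) ≤ 1 / b - 1 := Real.log_le_sub_one_of_pos (by positivity)
      rw [one_div, Real.log_inv] at h1
      have h2 : b * (-Real.log b) ≤ b * (b⁻¹ - 1) := mul_le_mul_of_nonneg_left h1 hb
      rw [mul_sub, mul_inv_cancel₀ (ne_of_gt h0)] at h2
      nlinarith

private lemma aux_max_sub {m : ℝ} : max m 0 - max (-m) 0 = m := by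
  rcases le_total m 0 with h | h
  · rw [max_eq_right h, max_eq_left (by linarith)]; ring
  · rw [max_eq_left h, max_eq_right (by linarith)]; ring

private lemma aux_key {a b : ℝ} (ha : 0 ≤ a) (hb : 0 < b) :
    (a * Real.log a - a + 1) + a * max (-Real.log b) 0 + b * max (Real.log b) 0
    = b * ((a / b) * Real.log (a / b) - a / b + 1) + (b * Real.log b - b + 1)
      + a * max (Real.log b) 0 + b * max (-Real.log b) 0 := by
  have hm := aux_max_sub (m := Real.log b)
  rcases eq_or_lt_of_le ha with h0 | h0
  · rw [← h0]
    simp only [zero_mul, zero_sub, zero_add, zero_div, mul_zero, add_zero]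
    nlinarith [hm]
  · have hdiv : b * ((a / b) * Real.log (a / b) - a / b + 1)
        = a * (Real.log a - Real.log b) - a + b := by
      rw [Real.log_div (ne_of_gt h0) (ne_of_gt hb)]
      field_simp
    rw [hdiv]
    nlinarith [hm]

private lemma aux_ennreal_identity (G Yx : ℝ≥0∞) (hG : G ≠ ∞) (hYx : Yx ≠ ∞)
    (h0 : Yx = 0 → G = 0) :
    ENNReal.ofReal (G.toReal * Real.log G.toReal - G.toReal + 1)
      + (G * ENNReal.ofReal (max (-Real.log Yx.toReal) 0)
         + Yx * ENNReal.ofReal (max (Real.log Yx.toReal) 0))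
    = (Yx * ENNReal.ofReal ((G / Yx).toReal * Real.log (G / Yx).toReal - (G / Yx).toReal + 1)
        + ENNReal.ofReal (Yx.toReal * Real.log Yx.toReal - Yx.toReal + 1))
      + (G * ENNReal.ofReal (max (Real.log Yx.toReal) 0)
         + Yx * ENNReal.ofReal (max (-Real.log Yx.toReal) 0)) := by
  by_cases hy0 : Yx = 0
  · have hg0 : G = 0 := h0 hy0
    simp [hy0, hg0, Real.log_zero]
  · rw [ENNReal.toReal_div]
    set a : ℝ := G.toReal with hadef
    set b : ℝ := Yx.toReal with hbdef
    have ha0 : (0:ℝ) ≤ a := ENNReal.toReal_nonneg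
    have hb : 0 < b := ENNReal.toReal_pos hy0 hYx
    have hb0 : (0:ℝ) ≤ b := hb.le
    have hga : G = ENNReal.ofReal a := (ENNReal.ofReal_toReal hG).symm
    have hYb : Yx = ENNReal.ofReal b := (ENNReal.ofReal_toReal hYx).symm
    have hfa : 0 ≤ a * Real.log a - a + 1 := aux_f_nonneg ha0
    have hfb : 0 ≤ b * Real.log b - b + 1 := aux_f_nonneg hb0
    have hfab : 0 ≤ (a / b) * Real.log (a / b) - a / b + 1 := aux_f_nonneg (by positivity)
    have hmp : (0:ℝ) ≤ max (Real.log b) 0 := le_max_right _ _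
    have hmn : (0:ℝ) ≤ max (-Real.log b) 0 := le_max_right _ _
    rw [hga, hYb]
    simp only [← ENNReal.ofReal_mul ha0, ← ENNReal.ofReal_mul hb0]
    rw [← ENNReal.ofReal_add (mul_nonneg ha0 hmn) (mul_nonneg hb0 hmp),
        ← ENNReal.ofReal_add hfa (add_nonneg (mul_nonneg ha0 hmn) (mul_nonneg hb0 hmp)),
        ← ENNReal.ofReal_add (mul_nonneg hb0 hfab) hfb,
        ← ENNReal.ofReal_add (mul_nonneg ha0 hmp) (mul_nonneg hb0 hmn),
        ← ENNReal.ofReal_add (add_nonneg (mul_nonneg hb0 hfab) hfb)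
          (add_nonneg (mul_nonneg ha0 hmp) (mul_nonneg hb0 hmn))]
    exact congrArg ENNReal.ofReal (by linarith [aux_key ha0 hb])


/-- Pythagorean identity for the information projection: if `Y` is a conditional
density of `μ = ν.withDensity ρ` given a sub-σ-algebra `F`, and `θ` is a finite
measure agreeing with `μ` on `F`, then `D(θ‖ν) = D(θ‖μ_F) + D(μ_F‖ν)` where
`μ_F = ν.withDensity Y`. -/
theorem infoDiv_pythagorean
    {Ω : Type*} [mΩ : MeasurableSpace Ω] (ν : Measure Ω) [IsFiniteMeasure ν]
    (ρ : Ω → ℝ≥0∞) (hρ : Measurable ρ)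
    (μ : Measure Ω) (hμ : μ = ν.withDensity ρ) [IsFiniteMeasure μ]
    (F : MeasurableSpace Ω) (hF : F ≤ mΩ)
    (Y : Ω → ℝ≥0∞) (hYmeas : Measurable[F] Y)
    (hY : ∀ A : Set Ω, MeasurableSet[F] A → ∫⁻ x in A, Y x ∂ν = μ A)
    (θ : @Measure Ω mΩ) [IsFiniteMeasure θ]
    (hθ : ∀ A : Set Ω, MeasurableSet[F] A → θ A = μ A) :
    @infoDiv Ω mΩ θ ν
      = @infoDiv Ω mΩ θ (ν.withDensity Y) + @infoDiv Ω mΩ (ν.withDensity Y) ν := by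
  classical
  set μF : @Measure Ω mΩ := ν.withDensity Y with hμF
  have hYm : Measurable[mΩ] Y := hYmeas.mono hF le_rfl
  have hYint : ∫⁻ x, Y x ∂ν = μ Set.univ := by
    rw [← hY Set.univ MeasurableSet.univ, Measure.restrict_univ]
  have hμFuniv : μF Set.univ = μ Set.univ := by
    rw [hμF, withDensity_apply _ MeasurableSet.univ, Measure.restrict_univ, hYint]
  haveI hμFfin : IsFiniteMeasure μF := ⟨by rw [hμFuniv]; exact measure_lt_top μ _⟩
  by_cases hac : θ ≪ ν
  swap
  · have hacF : ¬ θ ≪ μF := fun h => hac (h.trans (withDensity_absolutelyContinuous ν Y))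
    unfold infoDiv
    rw [if_neg hac, if_neg hacF, top_add]
  -- main case
  set g : Ω → ℝ≥0∞ := θ.rnDeriv ν with hgdef
  have hgm : Measurable[mΩ] g := θ.measurable_rnDeriv ν
  have hθg : ν.withDensity g = θ := Measure.withDensity_rnDeriv_eq θ ν hac
  have hglt : ∀ᵐ x ∂ν, g x < ∞ := θ.rnDeriv_lt_top ν
  have hYlt : ∀ᵐ x ∂ν, Y x < ∞ :=
    ae_lt_top hYm (by rw [hYint]; exact (measure_lt_top μ _).ne)
  -- g vanishes a.e. where Y vanishes
  have hS : MeasurableSet[F] {x | Y x = 0} := hYmeas (measurableSet_singleton 0)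
  have hSm : MeasurableSet[mΩ] {x | Y x = 0} := hF _ hS
  have hg0 : ∀ᵐ x ∂ν, Y x = 0 → g x = 0 := by
    have hz : ∫⁻ x in {x | Y x = 0}, g x ∂ν = 0 := by
      rw [← withDensity_apply _ hSm, hθg, hθ _ hS, ← hY _ hS]
      rw [setLIntegral_congr_fun hSm (fun x hx => hx)]
      simp
    exact (setLIntegral_eq_zero_iff hSm hgm).mp hz
  -- θ as a density over μF
  set h : Ω → ℝ≥0∞ := fun x => g x / Y x with hhdef
  have hhm : Measurable[mΩ] h := hgm.div hYm
  have hθh : μF.withDensity h = θ := by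
    rw [hμF, ← withDensity_mul ν hYm hhm, ← hθg]
    apply withDensity_congr_ae
    filter_upwards [hYlt, hg0] with x hx1 hx2
    by_cases h0 : Y x = 0
    · simp [h0, hx2 h0, hhdef]
    · simp only [Pi.mul_apply, hhdef]
      exact ENNReal.mul_div_cancel h0 hx1.ne
  have hacF : θ ≪ μF := hθh ▸ withDensity_absolutelyContinuous μF h
  have hrn1 : θ.rnDeriv μF =ᵐ[μF] h := hθh ▸ Measure.rnDeriv_withDensity μF hhm
  have hrn2 : μF.rnDeriv ν =ᵐ[ν] Y := Measure.rnDeriv_withDensity ν hYm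
  -- trim equality and the key testing identity
  have htrim : θ.trim hF = μF.trim hF := by
    refine Measure.ext fun A hA => ?_
    rw [trim_measurableSet_eq hF hA, trim_measurableSet_eq hF hA, hθ A hA, hμF,
        withDensity_apply _ (hF A hA), hY A hA]
  have htest : ∀ (k : Ω → ℝ≥0∞), Measurable[F] k →
      ∫⁻ x, g x * k x ∂ν = ∫⁻ x, Y x * k x ∂ν := by
    intro k hk
    have hkm : Measurable[mΩ] k := hk.mono hF le_rfl
    have e1 : ∫⁻ x, g x * k x ∂ν = ∫⁻ x, k x ∂θ := by
      rw [← hθg, lintegral_withDensity_eq_lintegral_mul ν hgm hkm]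
      simp only [Pi.mul_apply]
    have e2 : ∫⁻ x, Y x * k x ∂ν = ∫⁻ x, k x ∂μF := by
      rw [hμF, lintegral_withDensity_eq_lintegral_mul ν hYm hkm]
      simp only [Pi.mul_apply]
    rw [e1, e2, ← lintegral_trim hF hk, ← lintegral_trim hF hk, htrim]
  -- the log factors
  set Lp : Ω → ℝ≥0∞ := fun x => ENNReal.ofReal (max (Real.log (Y x).toReal) 0) with hLpdef
  set Ln : Ω → ℝ≥0∞ := fun x => ENNReal.ofReal (max (-Real.log (Y x).toReal) 0) with hLndef
  have hLpF : Measurable[F] Lp :=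
    ((Real.measurable_log.comp hYmeas.ennreal_toReal).max measurable_const).ennreal_ofReal
  have hLnF : Measurable[F] Ln :=
    (((Real.measurable_log.comp hYmeas.ennreal_toReal).neg).max measurable_const).ennreal_ofReal
  have hLpm : Measurable[mΩ] Lp := hLpF.mono hF le_rfl
  have hLnm : Measurable[mΩ] Ln := hLnF.mono hF le_rfl
  -- the φ integrands
  have hΦm : ∀ (u : Ω → ℝ≥0∞), Measurable[mΩ] u → Measurable[mΩ] (fun x =>
      ENNReal.ofReal ((u x).toReal * Real.log (u x).toReal - (u x).toReal + 1)) := by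
    intro u hu
    have h1 := hu.ennreal_toReal
    exact (((h1.mul (Real.measurable_log.comp h1)).sub h1).add measurable_const).ennreal_ofReal
  set Φg : Ω → ℝ≥0∞ := fun x =>
    ENNReal.ofReal ((g x).toReal * Real.log (g x).toReal - (g x).toReal + 1) with hΦgdef
  set ΦY : Ω → ℝ≥0∞ := fun x =>
    ENNReal.ofReal ((Y x).toReal * Real.log (Y x).toReal - (Y x).toReal + 1) with hΦYdef
  set Φh : Ω → ℝ≥0∞ := fun x =>
    ENNReal.ofReal ((h x).toReal * Real.log (h x).toReal - (h x).toReal + 1) with hΦhdef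
  have hΦgm : Measurable[mΩ] Φg := hΦm g hgm
  have hΦYm : Measurable[mΩ] ΦY := hΦm Y hYm
  have hΦhm : Measurable[mΩ] Φh := hΦm h hhm
  -- identify the three infoDiv values
  have hd1 : @infoDiv Ω mΩ θ ν = ∫⁻ x, Φg x ∂ν := by
    unfold infoDiv
    rw [if_pos hac]
  have hd2 : @infoDiv Ω mΩ μF ν = ∫⁻ x, ΦY x ∂ν := by
    unfold infoDiv
    rw [if_pos (hμF ▸ withDensity_absolutelyContinuous ν Y)]
    refine lintegral_congr_ae (hrn2.mono fun x hx => ?_)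
    rw [hΦYdef]; simp only [hx]
  have hd3 : @infoDiv Ω mΩ θ μF = ∫⁻ x, Y x * Φh x ∂ν := by
    unfold infoDiv
    rw [if_pos hacF]
    have e1 : ∫⁻ x, ENNReal.ofReal ((θ.rnDeriv μF x).toReal * Real.log (θ.rnDeriv μF x).toReal
        - (θ.rnDeriv μF x).toReal + 1) ∂μF = ∫⁻ x, Φh x ∂μF := by
      refine lintegral_congr_ae (hrn1.mono fun x hx => ?_)
      rw [hΦhdef]; simp only [hx]
    rw [e1, hμF, lintegral_withDensity_eq_lintegral_mul ν hYm hΦhm]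
    simp only [Pi.mul_apply]
  -- pointwise identity
  have hpt : ∀ᵐ x ∂ν, Φg x + (g x * Ln x + Y x * Lp x)
      = (Y x * Φh x + ΦY x) + (g x * Lp x + Y x * Ln x) := by
    filter_upwards [hglt, hYlt, hg0] with x hgx hYx h0x
    simp only [hΦgdef, hΦYdef, hΦhdef, hLpdef, hLndef, hhdef]
    exact aux_ennreal_identity (g x) (Y x) hgx.ne hYx.ne h0x
  -- integrated identity
  have hint : (∫⁻ x, Φg x ∂ν) + ((∫⁻ x, Y x * Ln x ∂ν) + (∫⁻ x, Y x * Lp x ∂ν))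
      = ((∫⁻ x, Y x * Φh x ∂ν) + (∫⁻ x, ΦY x ∂ν))
        + ((∫⁻ x, Y x * Lp x ∂ν) + (∫⁻ x, Y x * Ln x ∂ν)) := by
    have h1 := lintegral_congr_ae hpt
    rw [lintegral_add_left hΦgm, lintegral_add_left (f := fun x => g x * Ln x) (hgm.mul hLnm),
        lintegral_add_left (f := fun x => Y x * Φh x + ΦY x) ((hYm.mul hΦhm).add hΦYm),
        lintegral_add_left (f := fun x => Y x * Φh x) (hYm.mul hΦhm),
        lintegral_add_left (f := fun x => g x * Lp x) (hgm.mul hLpm),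
        htest Ln hLnF, htest Lp hLpF] at h1
    exact h1
  -- finiteness of the negative part
  have hBlt : (∫⁻ x, Y x * Ln x ∂ν) ≠ ∞ := by
    have hle : (∫⁻ x, Y x * Ln x ∂ν) ≤ ∫⁻ _x, 1 ∂ν := by
      refine lintegral_mono_ae ?_
      filter_upwards [hYlt] with x hx
      rw [hLndef]
      calc Y x * ENNReal.ofReal (max (-Real.log (Y x).toReal) 0)
          = ENNReal.ofReal ((Y x).toReal * max (-Real.log (Y x).toReal) 0) := by
            rw [ENNReal.ofReal_mul ENNReal.toReal_nonneg, ENNReal.ofReal_toReal hx.ne]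
        _ ≤ 1 := by
            rw [← ENNReal.ofReal_one]
            exact ENNReal.ofReal_le_ofReal (aux_neg_le ENNReal.toReal_nonneg)
    refine ne_top_of_le_ne_top ?_ hle
    simp only [lintegral_one]
    exact (measure_lt_top ν _).ne
  -- case split on the positive part
  by_cases hA : (∫⁻ x, Y x * Lp x ∂ν) = ∞
  · -- both sides are infinite
    have hgA : (∫⁻ x, g x * Lp x ∂ν) = ∞ := by rw [htest Lp hLpF]; exact hA
    have hmono : ∀ (u : Ω → ℝ≥0∞), (∀ᵐ x ∂ν, u x < ∞) → Measurable[mΩ] u →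
        (∫⁻ x, u x * Lp x ∂ν) ≤ (∫⁻ x, ENNReal.ofReal ((u x).toReal * Real.log (u x).toReal
          - (u x).toReal + 1) ∂ν) + ∫⁻ x, Y x ∂ν := by
      intro u hult hum
      rw [← lintegral_add_left (hΦm u hum)]
      refine lintegral_mono_ae ?_
      filter_upwards [hult, hYlt] with x hux hYx
      have hbx : Y x = ENNReal.ofReal (Y x).toReal := (ENNReal.ofReal_toReal hYx.ne).symm
      have hux' : u x = ENNReal.ofReal (u x).toReal := (ENNReal.ofReal_toReal hux.ne).symm
      calc u x * Lp x
          = ENNReal.ofReal ((u x).toReal * max (Real.log (Y x).toReal) 0) := by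
            rw [hLpdef, ENNReal.ofReal_mul ENNReal.toReal_nonneg, ← hux']
        _ ≤ ENNReal.ofReal (((u x).toReal * Real.log (u x).toReal - (u x).toReal + 1)
            + (Y x).toReal) :=
            ENNReal.ofReal_le_ofReal (aux_mul_log_le ENNReal.toReal_nonneg ENNReal.toReal_nonneg)
        _ = ENNReal.ofReal ((u x).toReal * Real.log (u x).toReal - (u x).toReal + 1) + Y x := by
            rw [ENNReal.ofReal_add (aux_f_nonneg ENNReal.toReal_nonneg) ENNReal.toReal_nonneg,
              ← hbx]
    have hYfin : (∫⁻ x, Y x ∂ν) ≠ ∞ := by rw [hYint]; exact (measure_lt_top μ _).ne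
    have hX : (∫⁻ x, Φg x ∂ν) = ∞ := by
      by_contra hX
      have := hmono g hglt hgm
      rw [hgA] at this
      exact (ENNReal.add_ne_top.mpr ⟨hX, hYfin⟩) (top_le_iff.mp this)
    have hSS : (∫⁻ x, ΦY x ∂ν) = ∞ := by
      by_contra hSS
      have := hmono Y hYlt hYm
      rw [hA] at this
      exact (ENNReal.add_ne_top.mpr ⟨hSS, hYfin⟩) (top_le_iff.mp this)
    rw [hd1, hd2, hd3, hX, hSS, add_top]
  · -- finite case: cancel
    have hABfin : ((∫⁻ x, Y x * Lp x ∂ν) + (∫⁻ x, Y x * Ln x ∂ν)) ≠ ∞ :=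
      ENNReal.add_ne_top.mpr ⟨hA, hBlt⟩
    rw [hd1, hd2, hd3]
    have h2 : (∫⁻ x, Φg x ∂ν) + ((∫⁻ x, Y x * Lp x ∂ν) + (∫⁻ x, Y x * Ln x ∂ν))
        = ((∫⁻ x, Y x * Φh x ∂ν) + (∫⁻ x, ΦY x ∂ν))
          + ((∫⁻ x, Y x * Lp x ∂ν) + (∫⁻ x, Y x * Ln x ∂ν)) := by
      rw [← hint]; ring
    exact WithTop.add_right_cancel hABfin h2
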